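/- arXiv:1802.06925 — 9 statements merged into one kernel-verified Lean document; each statement's English description precedes it below -/
import Mathlib

section
/- Let g ∈ ℝ^d with g ≠ 0, H a symmetric d×d matrix, σ > 0, and define m(s) = ⟨g, s⟩ + ½⟨s, H s⟩ + (σ/3)‖s‖³. Let K = ⟨H g, g⟩ / ‖g‖² and let s^C = −α^C g minimize m(−α g) over α ≥ 0. Then ‖s^C‖ = (√(K² + 4σ‖g‖) − K) / (2σ). -/
set_option maxHeartbeats 1000000


open scoped RealInnerProductSpace

/-- Auxiliary: solving the quadratic `σ t² + K t − n = 0` for `t ≥ 0`, `n > 0`, `σ > 0`. -/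
lemma cubic_quadratic_root (σ K t n : ℝ) (hσ : 0 < σ) (hn : 0 < n)
    (ht : 0 ≤ t) (hE : σ * t ^ 2 + K * t - n = 0) :
    t = (Real.sqrt (K ^ 2 + 4 * σ * n) - K) / (2 * σ) := by
  have htpos : 0 < t := by
    rcases ht.lt_or_eq with h | h
    · exact h
    · exfalso; rw [← h] at hE; nlinarith
  have hsum : 0 < 2 * σ * t + K := by nlinarith [mul_pos htpos htpos]
  have hsq : K ^ 2 + 4 * σ * n = (2 * σ * t + K) ^ 2 := by nlinarith
  have : Real.sqrt (K ^ 2 + 4 * σ * n) = 2 * σ * t + K := by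
    rw [hsq, Real.sqrt_sq hsum.le]
  rw [this]
  field_simp
  ring

/-- The Cauchy step length for the cubic-regularized model equals
`(√(K² + 4σ‖g‖) − K) / (2σ)`. -/
theorem cubic_cauchy_step_length
    {d : ℕ} (g : EuclideanSpace ℝ (Fin d)) (hg : g ≠ 0)
    (H : EuclideanSpace ℝ (Fin d) →L[ℝ] EuclideanSpace ℝ (Fin d))
    (hHsym : ∀ u v, ⟪H u, v⟫ = ⟪u, H v⟫)
    (σ : ℝ) (hσ : 0 < σ)
    (m : EuclideanSpace ℝ (Fin d) → ℝ)
    (hm : ∀ s, m s = ⟪g, s⟫ + (1/2) * ⟪s, H s⟫ + (σ/3) * ‖s‖^3)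
    (K : ℝ) (hK : K = ⟪H g, g⟫ / ‖g‖^2)
    (αC : ℝ) (hαC : 0 ≤ αC)
    (hmin : ∀ α : ℝ, 0 ≤ α → m (-αC • g) ≤ m (-α • g))
    (sC : EuclideanSpace ℝ (Fin d)) (hsC : sC = -αC • g) :
    ‖sC‖ = (Real.sqrt (K^2 + 4*σ*‖g‖) - K) / (2*σ) := by
  set n : ℝ := ‖g‖ with hn
  clear_value n
  have hng : 0 < n := hn ▸ norm_pos_iff.mpr hg
  have hn2 : (0:ℝ) < n ^ 2 := by positivity
  -- inner products
  have hgHg : ⟪g, H g⟫ = K * n ^ 2 := by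
    rw [hK, real_inner_comm]
    field_simp
  -- explicit formula for m (-α • g) when α ≥ 0
  have hψ : ∀ α : ℝ, 0 ≤ α →
      m (-α • g) = -(n^2) * α + (K * n^2 / 2) * α ^ 2 + (σ * n ^ 3 / 3) * α ^ 3 := by
    intro α hα
    rw [hm]
    have h1 : ⟪g, (-α) • g⟫ = -α * (n^2) := by
      rw [real_inner_smul_right, real_inner_self_eq_norm_sq, ← hn]
    have h2 : ⟪(-α) • g, H ((-α) • g)⟫ = α ^ 2 * ⟪g, H g⟫ := by
      rw [map_smul, real_inner_smul_left, real_inner_smul_right]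
      ring
    have h3 : ‖(-α) • g‖ = α * n := by
      rw [norm_smul, Real.norm_eq_abs, abs_neg, abs_of_nonneg hα, ← hn]
    rw [h1, h2, h3, hgHg]
    ring
  -- φ: cubic polynomial model
  set φ : ℝ → ℝ := fun α => -(n^2) * α + (K * n^2 / 2) * α ^ 2 + (σ * n ^ 3 / 3) * α ^ 3 with hφ
  clear_value φ
  -- αC > 0
  have hαCpos : 0 < αC := by
    rcases hαC.lt_or_eq with h | h
    · exact h
    · exfalso
      set B : ℝ := |K * n^2| / 2 + σ * n ^ 3 / 3 + 1 with hB
      have hBpos : 0 < B := by positivity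
      set α₀ : ℝ := min 1 (n ^ 2 / B) with hα₀
      have hα₀pos : 0 < α₀ := lt_min one_pos (by positivity)
      have hα₀le1 : α₀ ≤ 1 := min_le_left _ _
      have hα₀le : α₀ ≤ n ^ 2 / B := min_le_right _ _
      have h0 : m (-αC • g) = 0 := by
        rw [← h, hψ 0 le_rfl]; ring
      have hval := hmin α₀ hα₀pos.le
      rw [h0, hψ α₀ hα₀pos.le] at hval
      have hBα : B * α₀ ≤ n ^ 2 := by
        rw [hα₀] at hα₀le ⊢
        calc B * min 1 (n^2/B) ≤ B * (n^2/B) := by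
              exact mul_le_mul_of_nonneg_left hα₀le hBpos.le
          _ = n ^ 2 := by field_simp
      have habs : K * n^2 / 2 * α₀ ≤ |K * n^2| / 2 * α₀ := by
        apply mul_le_mul_of_nonneg_right _ hα₀pos.le
        have := le_abs_self (K * n^2)
        linarith
      have e1 : K * n^2 / 2 * α₀ ^ 2 ≤ |K * n^2| / 2 * α₀ ^ 2 := by
        apply mul_le_mul_of_nonneg_right _ (sq_nonneg α₀)
        have := le_abs_self (K * n^2); linarith
      have e2 : σ * n ^ 3 / 3 * α₀ ^ 3 ≤ σ * n ^ 3 / 3 * α₀ ^ 2 := by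
        have h3 : α₀ ^ 3 ≤ α₀ ^ 2 := by nlinarith
        exact mul_le_mul_of_nonneg_left h3 (by positivity)
      have e3 : B * α₀ ^ 2 ≤ n ^ 2 * α₀ := by
        nlinarith [mul_le_mul_of_nonneg_right hBα hα₀pos.le]
      rw [hB] at e3
      have hα₀sq : 0 < α₀ ^ 2 := pow_pos hα₀pos 2
      nlinarith [e1, e2, e3, hval, hα₀sq]
  -- local min of φ at αC
  have hloc : IsLocalMin φ αC := by
    have hev : ∀ᶠ α in nhds αC, 0 < α := eventually_gt_nhds hαCpos
    have hlocψ : IsLocalMin (fun α => m (-α • g)) αC := by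
      filter_upwards [hev] with α hα
      exact hmin α hα.le
    have heq : (fun α => m (-α • g)) =ᶠ[nhds αC] φ := by
      filter_upwards [hev] with α hα
      rw [hφ]
      exact hψ α hα.le
    exact hlocψ.congr heq
  -- derivative of φ at αC
  have hderiv : HasDerivAt φ (-(n^2) + (K * n^2) * αC + (σ * n ^ 3) * αC ^ 2) αC := by
    rw [hφ]
    have h1 : HasDerivAt (fun α : ℝ => -(n^2) * α) (-(n^2)) αC := by
      simpa using (hasDerivAt_id αC).const_mul (-(n^2))
    have h2 : HasDerivAt (fun α : ℝ => (K * n^2 / 2) * α ^ 2)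
        ((K * n^2 / 2) * (2 * αC ^ 1)) αC := by
      simpa using (hasDerivAt_pow 2 αC).const_mul (K * n^2 / 2)
    have h3 : HasDerivAt (fun α : ℝ => (σ * n ^ 3 / 3) * α ^ 3)
        ((σ * n ^ 3 / 3) * (3 * αC ^ 2)) αC := by
      simpa using (hasDerivAt_pow 3 αC).const_mul (σ * n ^ 3 / 3)
    have hval2 : -(n^2) + (K * n^2) * αC + (σ * n ^ 3) * αC ^ 2
        = (-(n^2) + (K * n^2 / 2) * (2 * αC ^ 1)) + (σ * n ^ 3 / 3) * (3 * αC ^ 2) := by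
      ring
    rw [hval2]
    exact (h1.add h2).add h3
  have hzero : -(n^2) + (K * n^2) * αC + (σ * n ^ 3) * αC ^ 2 = 0 :=
    hloc.hasDerivAt_eq_zero hderiv
  -- norm of sC
  have hnorm : ‖sC‖ = αC * n := by
    rw [hsC, norm_smul, Real.norm_eq_abs, abs_neg, abs_of_nonneg hαC, ← hn]
  -- quadratic equation in t = αC * n
  have hE : σ * (αC * n) ^ 2 + K * (αC * n) - n = 0 := by
    have hE' : n * (σ * (αC * n) ^ 2 + K * (αC * n) - n) = 0 := by
      linear_combination hzero
    exact (mul_eq_zero.mp hE').resolve_left (ne_of_gt hng)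
  rw [hnorm]
  exact cubic_quadratic_root σ K (αC * n) n hσ hng
    (mul_nonneg hαC hng.le) hE
end

section
/- Let g ∈ ℝ^d, g ≠ 0, H symmetric, σ > 0, m(s) = ⟨g,s⟩ + ½⟨s, Hs⟩ + (σ/3)‖s‖³, and K = ⟨Hg, g⟩/‖g‖². If s^C minimizes m along −g over α ≥ 0, then −m(s^C) ≥ (‖g‖ / (2√3)) · min{ ‖g‖/|K| , ‖g‖/√(σ‖g‖) }. -/
open scoped RealInnerProductSpace

/-- Cauchy point descent bound for the cubic model:
`−m(s^C) ≥ (‖g‖/(2√3)) · min{‖g‖/|K|, ‖g‖/√(σ‖g‖)}`,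
where for `K = 0` the term `‖g‖/|K|` is interpreted as `+∞`. -/
theorem cubic_cauchy_descent
    {d : ℕ} (g : EuclideanSpace ℝ (Fin d)) (hg : g ≠ 0)
    (H : EuclideanSpace ℝ (Fin d) →L[ℝ] EuclideanSpace ℝ (Fin d))
    (hHsym : ∀ u v, ⟪H u, v⟫ = ⟪u, H v⟫)
    (σ : ℝ) (hσ : 0 < σ)
    (m : EuclideanSpace ℝ (Fin d) → ℝ)
    (hm : ∀ s, m s = ⟪g, s⟫ + (1/2) * ⟪s, H s⟫ + (σ/3) * ‖s‖^3)
    (K : ℝ) (hK : K = ⟪H g, g⟫ / ‖g‖^2)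
    (αC : ℝ) (hαC : 0 ≤ αC)
    (hmin : ∀ α : ℝ, 0 ≤ α → m (-αC • g) ≤ m (-α • g))
    (sC : EuclideanSpace ℝ (Fin d)) (hsC : sC = -αC • g) :
    -m sC ≥ (‖g‖ / (2 * Real.sqrt 3)) *
      (if K = 0 then ‖g‖ / Real.sqrt (σ * ‖g‖)
       else min (‖g‖ / |K|) (‖g‖ / Real.sqrt (σ * ‖g‖))) := by
  have hGpos : (0:ℝ) < ‖g‖ := norm_pos_iff.mpr hg
  have hgg : ⟪g, H g⟫ = K * ‖g‖^2 := by
    rw [hK, ← hHsym g g]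
    field_simp
  have hval : ∀ α : ℝ, 0 ≤ α →
      m (-α • g) = -(α*‖g‖^2) + (α^2/2)*(K*‖g‖^2) + (σ/3)*(α^3*‖g‖^3) := by
    intro α hα
    rw [hm]
    have h1 : ⟪g, (-α) • g⟫ = -(α * ‖g‖^2) := by
      rw [real_inner_smul_right, real_inner_self_eq_norm_sq]; ring
    have h2 : ⟪(-α) • g, H ((-α) • g)⟫ = α^2 * (K * ‖g‖^2) := by
      rw [map_smul, real_inner_smul_left, real_inner_smul_right, hgg]; ring
    have h3 : ‖(-α) • g‖ = α * ‖g‖ := by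
      rw [norm_smul]; simp [abs_of_nonneg hα]
    rw [h1, h2, h3]
    ring
  have hsg : 0 < Real.sqrt (σ * ‖g‖) := Real.sqrt_pos.mpr (by positivity)
  have hsg2 : Real.sqrt (σ * ‖g‖) ^ 2 = σ * ‖g‖ := Real.sq_sqrt (by positivity)
  set t : ℝ := if K = 0 then 1 / Real.sqrt (σ * ‖g‖)
      else min (1 / |K|) (1 / Real.sqrt (σ * ‖g‖)) with htdef
  have htpos : 0 < t := by
    rw [htdef]; split
    · positivity
    · rename_i h
      exact lt_min (by positivity) (by positivity)
  have ht2 : t ≤ 1 / Real.sqrt (σ * ‖g‖) := by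
    rw [htdef]; split
    · exact le_refl _
    · exact min_le_right _ _
  have ha : t * K ≤ 1 := by
    rw [htdef]; split
    · rename_i h; simp [h]
    · rename_i h
      have hKpos : 0 < |K| := abs_pos.mpr h
      have h1 : min (1 / |K|) (1 / Real.sqrt (σ * ‖g‖)) ≤ 1 / |K| := min_le_left _ _
      calc min (1 / |K|) (1 / Real.sqrt (σ * ‖g‖)) * K
          ≤ min (1 / |K|) (1 / Real.sqrt (σ * ‖g‖)) * |K| := by
            apply mul_le_mul_of_nonneg_left (le_abs_self K)
            exact le_of_lt (lt_min (by positivity) (by positivity))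
        _ ≤ (1 / |K|) * |K| := mul_le_mul_of_nonneg_right h1 hKpos.le
        _ = 1 := by field_simp
  have hb : σ * t^2 * ‖g‖ ≤ 1 := by
    have ht2' : t * Real.sqrt (σ * ‖g‖) ≤ 1 := by
      rw [le_div_iff₀ hsg] at ht2; exact ht2
    nlinarith [mul_le_mul ht2' ht2' (by positivity) zero_le_one, hsg2]
  have hrhs : (if K = 0 then ‖g‖ / Real.sqrt (σ * ‖g‖)
       else min (‖g‖ / |K|) (‖g‖ / Real.sqrt (σ * ‖g‖))) = ‖g‖ * t := by
    rw [htdef]; split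
    · rw [mul_one_div]
    · rw [div_eq_mul_one_div ‖g‖ |K|, div_eq_mul_one_div ‖g‖ (Real.sqrt _)]
      exact (mul_min_of_nonneg _ _ hGpos.le).symm
  rw [hrhs, hsC]
  have hle := hmin (t/2) (by positivity)
  rw [hval (t/2) (by positivity)] at hle
  have hs3 : (3:ℝ)/2 ≤ Real.sqrt 3 := by
    rw [show (3:ℝ)/2 = Real.sqrt ((3/2)^2) from (Real.sqrt_sq (by norm_num)).symm]
    exact Real.sqrt_le_sqrt (by norm_num)
  have hs3pos : 0 < Real.sqrt 3 := by positivity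
  have stepA : t * ‖g‖^2 / 3 ≤
      -(-(t/2*‖g‖^2) + ((t/2)^2/2)*(K*‖g‖^2) + (σ/3)*((t/2)^3*‖g‖^3)) := by
    have h1 : t * K * (t * ‖g‖^2) ≤ 1 * (t * ‖g‖^2) :=
      mul_le_mul_of_nonneg_right ha (by positivity)
    have h2 : σ * t^2 * ‖g‖ * (t * ‖g‖^2) ≤ 1 * (t * ‖g‖^2) :=
      mul_le_mul_of_nonneg_right hb (by positivity)
    nlinarith [h1, h2]
  have stepB : ‖g‖ / (2 * Real.sqrt 3) * (‖g‖ * t) ≤ t * ‖g‖^2 / 3 := by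
    have : ‖g‖ / (2 * Real.sqrt 3) * (‖g‖ * t) = t * ‖g‖^2 / (2 * Real.sqrt 3) := by ring
    rw [this]
    apply div_le_div_of_nonneg_left (by positivity) (by norm_num) (by linarith)
  linarith
end

section
/- Let g ∈ ℝ^d, g ≠ 0, H symmetric, σ > 0, m(s) = ⟨g,s⟩ + ½⟨s,Hs⟩ + (σ/3)‖s‖³, K = ⟨Hg,g⟩/‖g‖², and s^C the Cauchy point (minimizer of m along −g over α ≥ 0). Then −m(s^C) ≥ (1/12) ‖s^C‖² (√(K² + 4σ‖g‖) − K). -/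
open scoped RealInnerProductSpace

/-- Cauchy point descent bound for the cubic model:
`−m(s^C) ≥ (1/12)‖s^C‖²(√(K² + 4σ‖g‖) − K)`. -/
theorem cubic_cauchy_descent'
    {d : ℕ} (g : EuclideanSpace ℝ (Fin d)) (hg : g ≠ 0)
    (H : EuclideanSpace ℝ (Fin d) →L[ℝ] EuclideanSpace ℝ (Fin d))
    (hHsym : ∀ u v, ⟪H u, v⟫ = ⟪u, H v⟫)
    (σ : ℝ) (hσ : 0 < σ)
    (m : EuclideanSpace ℝ (Fin d) → ℝ)
    (hm : ∀ s, m s = ⟪g, s⟫ + (1/2) * ⟪s, H s⟫ + (σ/3) * ‖s‖^3)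
    (K : ℝ) (hK : K = ⟪H g, g⟫ / ‖g‖^2)
    (αC : ℝ) (hαC : 0 ≤ αC)
    (hmin : ∀ α : ℝ, 0 ≤ α → m (-αC • g) ≤ m (-α • g))
    (sC : EuclideanSpace ℝ (Fin d)) (hsC : sC = -αC • g) :
    -m sC ≥ (1/12) * ‖sC‖^2 * (Real.sqrt (K^2 + 4*σ*‖g‖) - K) := by
  have hgn : (0:ℝ) < ‖g‖ := norm_pos_iff.mpr hg
  set b : ℝ := ⟪g, H g⟫ with hb
  set φ : ℝ → ℝ := fun α => -(‖g‖^2) * α + (b/2) * α^2 + (σ*‖g‖^3/3) * α^3 with hφ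
  have hmφ : ∀ α : ℝ, 0 ≤ α → m (-α • g) = φ α := by
    intro α hα
    have h1 : (-α • g : EuclideanSpace ℝ (Fin d)) = (-α) • g := rfl
    have h2 : ⟪g, (-α) • g⟫ = -α * ‖g‖^2 := by
      rw [real_inner_smul_right, real_inner_self_eq_norm_sq]
    have h3 : ⟪(-α) • g, H ((-α) • g)⟫ = α^2 * b := by
      rw [map_smul, real_inner_smul_left, real_inner_smul_right]
      ring
    have h4 : ‖(-α) • g‖ = α * ‖g‖ := by
      rw [norm_smul, Real.norm_eq_abs, abs_neg, abs_of_nonneg hα]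
    rw [hm, h1, h2, h3, h4, hφ]
    ring
  rcases eq_or_lt_of_le hαC with h0 | h0
  · rw [hsC, ← h0]
    have : (-(0:ℝ) • g : EuclideanSpace ℝ (Fin d)) = 0 := by simp
    rw [this]
    simp [hm]
  · -- αC > 0 : derive stationarity
    have hloc : IsLocalMin φ αC := by
      have hmem : Set.Ioi (0:ℝ) ∈ nhds αC := Ioi_mem_nhds h0
      filter_upwards [hmem] with α hα
      rw [← hmφ αC hαC, ← hmφ α (le_of_lt hα)]
      exact hmin α (le_of_lt hα)
    have hd : HasDerivAt φ (-(‖g‖^2) + b * αC + σ*‖g‖^3 * αC^2) αC := by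
      have h1 : HasDerivAt (fun α : ℝ => -(‖g‖^2) * α)
          (-(‖g‖^2) * 1) αC := (hasDerivAt_id αC).const_mul _
      have h2 : HasDerivAt (fun α : ℝ => (b/2) * α^2)
          ((b/2) * ((2:ℕ) * αC^1)) αC := (hasDerivAt_pow 2 αC).const_mul _
      have h3 : HasDerivAt (fun α : ℝ => (σ*‖g‖^3/3) * α^3)
          ((σ*‖g‖^3/3) * ((3:ℕ) * αC^2)) αC := (hasDerivAt_pow 3 αC).const_mul _
      have := (h1.add h2).add h3
      refine this.congr_deriv ?_
      push_cast
      ring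
    have hstat : -(‖g‖^2) + b * αC + σ*‖g‖^3 * αC^2 = 0 :=
      hloc.hasDerivAt_eq_zero hd
    -- K in terms of b
    have hKb : K = b / ‖g‖^2 := by rw [hK, hb, hHsym]
    have hg2 : (0:ℝ) < ‖g‖^2 := by positivity
    have hKα : αC * K + σ * αC^2 * ‖g‖ = 1 := by
      rw [hKb]
      field_simp
      nlinarith [hstat, hgn, sq_nonneg (‖g‖)]
    -- sqrt closed form
    have hsq : K^2 + 4*σ*‖g‖ = (K + 2*σ*αC*‖g‖)^2 := by
      have h4 : 4*σ*‖g‖ = 4*σ*‖g‖*(αC * K + σ * αC^2 * ‖g‖) := by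
        rw [hKα]; ring
      nlinarith [hKα]
    have hKpos : 0 ≤ K + 2*σ*αC*‖g‖ := by
      have : αC * (K + 2*σ*αC*‖g‖) = 1 + σ * αC^2 * ‖g‖ := by
        nlinarith [hKα]
      nlinarith [mul_pos (mul_pos hσ (mul_pos h0 h0)) hgn]
    have hsqrt : Real.sqrt (K^2 + 4*σ*‖g‖) = K + 2*σ*αC*‖g‖ := by
      rw [hsq, Real.sqrt_sq hKpos]
    have hnorm : ‖sC‖ = αC * ‖g‖ := by
      rw [hsC]
      have : (-αC • g : EuclideanSpace ℝ (Fin d)) = (-αC) • g := rfl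
      rw [this, norm_smul, Real.norm_eq_abs, abs_neg, abs_of_nonneg hαC]
    have hmval : m sC = φ αC := by rw [hsC]; exact hmφ αC hαC
    rw [hmval, hsqrt, hnorm, hφ]
    simp only
    nlinarith [hstat, mul_pos h0 hg2, mul_nonneg (mul_nonneg hσ.le (pow_nonneg hαC 3)) (pow_nonneg hgn.le 3)]
end

section
/- Let H be a symmetric d×d matrix with λ_min(H) < 0, σ > 0, ν ∈ (0,1], and u a unit vector with ⟨u, Hu⟩ ≤ ν λ_min(H). Let s^E = α^E u where α^E minimizes m(α u) = α⟨g,u⟩ + (α²/2)⟨u,Hu⟩ + (σ/3)|α|³ over α ∈ ℝ (and w.l.o.g. ⟨g, s^E⟩ ≤ 0). Then σ‖s^E‖ ≥ ν|λ_min(H)| and −m(s^E) ≥ (ν|λ_min(H)|/6) ‖s^E‖². -/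
open scoped RealInnerProductSpace

/-- Eigen point descent for the cubic model: `σ‖s^E‖ ≥ ν|λ_min(H)|` and
`−m(s^E) ≥ (ν|λ_min(H)|/6)‖s^E‖²`. -/
theorem cubic_eigen_descent
    {d : ℕ} (g : EuclideanSpace ℝ (Fin d))
    (H : EuclideanSpace ℝ (Fin d) →L[ℝ] EuclideanSpace ℝ (Fin d))
    (hHsym : ∀ u v, ⟪H u, v⟫ = ⟪u, H v⟫)
    (σ ν lamMin : ℝ) (hσ : 0 < σ) (hν : ν ∈ Set.Ioc (0:ℝ) 1)
    (hlam_attained : ∃ v, ‖v‖ = 1 ∧ ⟪v, H v⟫ = lamMin)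
    (hlam_lb : ∀ v : EuclideanSpace ℝ (Fin d), ‖v‖ = 1 → lamMin ≤ ⟪v, H v⟫)
    (hlam_neg : lamMin < 0)
    (u : EuclideanSpace ℝ (Fin d)) (hu : ‖u‖ = 1)
    (hcurv : ⟪u, H u⟫ ≤ ν * lamMin)
    (m : EuclideanSpace ℝ (Fin d) → ℝ)
    (hm : ∀ t, m t = ⟪g, t⟫ + (1/2) * ⟪t, H t⟫ + (σ/3) * ‖t‖^3)
    (αE : ℝ) (sE : EuclideanSpace ℝ (Fin d)) (hsE : sE = αE • u)
    (hmin : ∀ α : ℝ, m sE ≤ m (α • u))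
    (hgsE : ⟪g, sE⟫ ≤ 0)
    (hstat : ⟪g, sE⟫ + ⟪sE, H sE⟫ + σ * ‖sE‖^3 = 0) :
    σ * ‖sE‖ ≥ ν * |lamMin| ∧ -m sE ≥ (ν * |lamMin| / 6) * ‖sE‖^2 := by
  obtain ⟨hν0, hν1⟩ := hν
  set c : ℝ := ⟪u, H u⟫ with hc
  have hc_neg : c < 0 := lt_of_le_of_lt hcurv (by nlinarith)
  have hnorm : ‖sE‖ = |αE| := by
    rw [hsE, norm_smul, hu, Real.norm_eq_abs, mul_one]
  have hQ : ⟪sE, H sE⟫ = αE ^ 2 * c := by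
    rw [hsE, map_smul, real_inner_smul_left, real_inner_smul_right]; ring
  have hgs : ⟪g, sE⟫ = αE * ⟪g, u⟫ := by
    rw [hsE, real_inner_smul_right]
  -- αE ≠ 0
  have hα : αE ≠ 0 := by
    intro h0
    have hsE0 : sE = 0 := by rw [hsE, h0, zero_smul]
    have hm0 : m sE = 0 := by
      rw [hm, hsE0]; simp
    set b : ℝ := ⟪g, u⟫ with hb
    set t : ℝ := min 1 (-(3 * c) / (4 * σ)) with ht
    have ht0 : 0 < t := by
      refine lt_min one_pos (div_pos (by linarith) (by linarith))
    have ht1 : t ≤ -(3 * c) / (4 * σ) := min_le_right _ _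
    set α : ℝ := if b ≤ 0 then t else -t with hαdef
    have hαb : α * b ≤ 0 := by
      rcases le_or_gt b 0 with h | h
      · simp only [hαdef, if_pos h]; exact mul_nonpos_of_nonneg_of_nonpos ht0.le h
      · simp only [hαdef, if_neg (not_le.mpr h)]
        exact mul_nonpos_of_nonpos_of_nonneg (by linarith) h.le
    have hαabs : |α| = t := by
      rcases le_or_gt b 0 with h | h
      · simp [hαdef, if_pos h, abs_of_pos ht0]
      · simp [hαdef, if_neg (not_le.mpr h), abs_of_pos ht0]
    have hmα : m (α • u) = α * b + (1/2) * (α ^ 2 * c) + (σ/3) * t ^ 3 := by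
      rw [hm, map_smul, real_inner_smul_left, real_inner_smul_right,
        real_inner_smul_right, norm_smul, hu, Real.norm_eq_abs, mul_one, hαabs]
      ring
    have hle := hmin α
    rw [hm0, hmα] at hle
    have hα2 : α ^ 2 = t ^ 2 := by rw [← sq_abs, hαabs]
    rw [hα2] at hle
    have hcube : σ * t ^ 3 ≤ -(3 * c) / 4 * t ^ 2 := by
      have := mul_le_mul_of_nonneg_left ht1 (by positivity : (0:ℝ) ≤ σ * t ^ 2)
      have hσ' := hσ.ne'
      calc σ * t ^ 3 = σ * t ^ 2 * t := by ring
        _ ≤ σ * t ^ 2 * (-(3 * c) / (4 * σ)) := this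
        _ = -(3 * c) / 4 * t ^ 2 := by field_simp
    have hct2 : c * t ^ 2 < 0 := mul_neg_of_neg_of_pos hc_neg (by positivity)
    linarith [hle, hαb, hcube, hct2]
  have hN : 0 < ‖sE‖ := by
    rw [hnorm]; exact abs_pos.mpr hα
  have habs : |lamMin| = -lamMin := abs_of_neg hlam_neg
  have hcurv2 : αE ^ 2 * c ≤ αE ^ 2 * (ν * lamMin) :=
    mul_le_mul_of_nonneg_left hcurv (sq_nonneg _)
  have hN2 : ‖sE‖ ^ 2 = αE ^ 2 := by rw [hnorm, sq_abs]
  rw [hQ] at hstat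
  have h1 : σ * ‖sE‖ ^ 3 ≥ -(αE ^ 2 * c) := by linarith [hgsE]
  have h2 : -(αE ^ 2 * c) ≥ ν * (-lamMin) * αE ^ 2 := by linarith [hcurv2]
  have key : σ * ‖sE‖ ^ 3 ≥ ν * |lamMin| * ‖sE‖ ^ 2 := by
    rw [habs, hN2]; linarith [h1, h2]
  constructor
  · have h3 : ν * |lamMin| * ‖sE‖ ^ 2 ≤ σ * ‖sE‖ * ‖sE‖ ^ 2 := by
      have : σ * ‖sE‖ * ‖sE‖ ^ 2 = σ * ‖sE‖ ^ 3 := by ring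
      linarith [key, this.ge]
    exact le_of_mul_le_mul_right h3 (pow_pos hN 2)
  · have hmval : m sE = ⟪g, sE⟫ + (1/2) * (αE ^ 2 * c) + (σ/3) * ‖sE‖ ^ 3 := by
      rw [hm, hQ]
    rw [habs, hN2]
    linarith [hstat, hmval, h1, h2]
end

section
/- Let g ∈ ℝ^d, H a symmetric d×d matrix, Δ > 0, and m(s) = ⟨g, s⟩ + ½⟨s, H s⟩. If s^C = −α^C g/‖g‖ where α^C = argmin_{0 ≤ α ≤ Δ} m(−α g/‖g‖), then −m(s^C) ≥ ½ ‖g‖ min{ ‖g‖ / (1 + ‖H‖), Δ }. -/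
set_option maxHeartbeats 800000
set_option synthInstance.maxHeartbeats 400000

open scoped RealInnerProductSpace

/-- Cauchy point descent for the trust-region model:
`−m(s^C) ≥ ½‖g‖ min{‖g‖/(1+‖H‖), Δ}`. -/
theorem tr_cauchy_descent
    {d : ℕ} (g : EuclideanSpace ℝ (Fin d)) (hg : g ≠ 0)
    (H : EuclideanSpace ℝ (Fin d) →L[ℝ] EuclideanSpace ℝ (Fin d))
    (hHsym : ∀ u v, ⟪H u, v⟫ = ⟪u, H v⟫)
    (Δ : ℝ) (hΔ : 0 < Δ)
    (m : EuclideanSpace ℝ (Fin d) → ℝ)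
    (hm : ∀ s, m s = ⟪g, s⟫ + (1/2) * ⟪s, H s⟫)
    (αC : ℝ) (hαC : αC ∈ Set.Icc (0:ℝ) Δ)
    (hmin : ∀ α ∈ Set.Icc (0:ℝ) Δ,
      m (-(αC / ‖g‖) • g) ≤ m (-(α / ‖g‖) • g))
    (sC : EuclideanSpace ℝ (Fin d)) (hsC : sC = -(αC / ‖g‖) • g) :
    -m sC ≥ (1/2) * ‖g‖ * min (‖g‖ / (1 + ‖H‖)) Δ := by
  have hn : (0:ℝ) < ‖g‖ := norm_pos_iff.mpr hg
  have hHn : (0:ℝ) ≤ ‖H‖ := norm_nonneg H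
  have h1H : (0:ℝ) < 1 + ‖H‖ := by linarith
  set n := ‖g‖ with hndef
  set c := ⟪g, H g⟫ with hcdef
  set t := min (n / (1 + ‖H‖)) Δ with ht
  have ht0 : 0 ≤ t := le_min (by positivity) hΔ.le
  have htΔ : t ≤ Δ := min_le_right _ _
  have ht1 : t ≤ n / (1 + ‖H‖) := min_le_left _ _
  have ht1' : t * (1 + ‖H‖) ≤ n := by
    rw [div_eq_mul_inv] at ht1
    calc t * (1 + ‖H‖) ≤ (n * (1 + ‖H‖)⁻¹) * (1 + ‖H‖) :=
          mul_le_mul_of_nonneg_right ht1 h1H.le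
      _ = n := by field_simp
  have hc : c ≤ ‖H‖ * n ^ 2 := by
    calc c ≤ ‖g‖ * ‖H g‖ := real_inner_le_norm _ _
      _ ≤ ‖g‖ * (‖H‖ * ‖g‖) :=
          mul_le_mul_of_nonneg_left (H.le_opNorm g) (norm_nonneg g)
      _ = ‖H‖ * n ^ 2 := by ring
  have hval : ∀ α : ℝ, m (-(α / n) • g) = -(α * n) + (1/2) * ((α / n) ^ 2 * c) := by
    intro α
    rw [hm]
    have h1 : ⟪g, -(α / n) • g⟫ = -(α / n) * ⟪g, g⟫ := real_inner_smul_right _ _ _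
    have h2 : ⟪-(α / n) • g, H (-(α / n) • g)⟫ = (α / n) ^ 2 * c := by
      rw [map_smul, real_inner_smul_left, real_inner_smul_right]
      ring
    rw [h1, h2, real_inner_self_eq_norm_sq]
    have hn' : n ≠ 0 := ne_of_gt hn
    field_simp
    ring
  have key : t ^ 2 * c ≤ t * n ^ 3 := by
    rcases le_or_gt c 0 with h | h
    · have h1 : t ^ 2 * c ≤ 0 := mul_nonpos_of_nonneg_of_nonpos (by positivity) h
      have h2 : 0 ≤ t * n ^ 3 := by positivity
      linarith
    · have h1 : t * (t * c) ≤ t * (t * (‖H‖ * n ^ 2)) :=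
        mul_le_mul_of_nonneg_left (mul_le_mul_of_nonneg_left hc ht0) ht0
      have h2 : t * ‖H‖ ≤ n := by nlinarith
      have h3 : (t * ‖H‖) * (t * n ^ 2) ≤ n * (t * n ^ 2) :=
        mul_le_mul_of_nonneg_right h2 (by positivity)
      nlinarith
  have hmono' := hmin t ⟨ht0, htΔ⟩
  rw [hval t, ← hsC] at hmono'
  have h3 : t ^ 2 * c / n ^ 2 ≤ t * n ^ 3 / n ^ 2 := by gcongr
  have h4 : t * n ^ 3 / n ^ 2 = t * n := by
    field_simp
  have h5 : (t / n) ^ 2 * c = t ^ 2 * c / n ^ 2 := by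
    field_simp
  rw [h5] at hmono'
  linarith
end

section
/- Let H be a symmetric d×d matrix with λ_min(H) < 0, g ∈ ℝ^d, Δ > 0, ν ∈ (0,1], and u a unit vector with ⟨g, u⟩ ≤ 0 and ⟨u, Hu⟩ ≤ −ν|λ_min(H)|. If s = α* u with α* = argmin_{|α| ≤ Δ} [ α⟨g,u⟩ + (α²/2)⟨u,Hu⟩ ], then −m(s) ≥ (ν/2)|λ_min(H)| Δ², where m(s) = ⟨g,s⟩ + ½⟨s,Hs⟩. -/
open scoped RealInnerProductSpace

/-- Eigen point descent for the trust-region model: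
`−m(s) ≥ (ν/2)|λ_min(H)|Δ²`. -/
theorem tr_eigen_descent
    {d : ℕ} (g : EuclideanSpace ℝ (Fin d))
    (H : EuclideanSpace ℝ (Fin d) →L[ℝ] EuclideanSpace ℝ (Fin d))
    (hHsym : ∀ u v, ⟪H u, v⟫ = ⟪u, H v⟫)
    (Δ ν lamMin : ℝ) (hΔ : 0 < Δ) (hν : ν ∈ Set.Ioc (0:ℝ) 1)
    (hlam_attained : ∃ v, ‖v‖ = 1 ∧ ⟪v, H v⟫ = lamMin)
    (hlam_lb : ∀ v : EuclideanSpace ℝ (Fin d), ‖v‖ = 1 → lamMin ≤ ⟪v, H v⟫)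
    (hlam_neg : lamMin < 0)
    (u : EuclideanSpace ℝ (Fin d)) (hu : ‖u‖ = 1)
    (hgu : ⟪g, u⟫ ≤ 0)
    (hcurv : ⟪u, H u⟫ ≤ -ν * |lamMin|)
    (m : EuclideanSpace ℝ (Fin d) → ℝ)
    (hm : ∀ s, m s = ⟪g, s⟫ + (1/2) * ⟪s, H s⟫)
    (αstar : ℝ) (hα : αstar ∈ Set.Icc (-Δ) Δ)
    (hmin : ∀ α ∈ Set.Icc (-Δ) Δ, m (αstar • u) ≤ m (α • u))
    (s : EuclideanSpace ℝ (Fin d)) (hs : s = αstar • u) :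
    -m s ≥ (ν/2) * |lamMin| * Δ^2 := by
  have key := hmin Δ ⟨by linarith, le_refl Δ⟩
  have hexp : m (Δ • u) = Δ * ⟪g, u⟫ + (1/2) * (Δ^2 * ⟪u, H u⟫) := by
    rw [hm, map_smul, real_inner_smul_right, real_inner_smul_left, real_inner_smul_right]
    ring
  have h1 : Δ * ⟪g, u⟫ ≤ 0 := mul_nonpos_of_nonneg_of_nonpos hΔ.le hgu
  have h2 : Δ^2 * ⟪u, H u⟫ ≤ Δ^2 * (-ν * |lamMin|) :=
    mul_le_mul_of_nonneg_left hcurv (sq_nonneg Δ)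
  rw [hs]
  nlinarith [key, hexp]
end

section
/- Let g ≠ 0, K = ⟨Hg,g⟩/‖g‖² > 0, σ > 0. Then (√(K² + 4σ‖g‖) − K)/(2σ) = 2‖g‖ / (√(K² + 4σ‖g‖) + K), and consequently if K² ≥ σ‖g‖ then ‖s^C‖ ≤ ‖g‖/K, while if K² ≤ σ‖g‖ then ‖s^C‖ ≤ ‖g‖/√(σ‖g‖). -/
open scoped RealInnerProductSpace

/-- For `K > 0`, `(√(K²+4σ‖g‖) − K)/(2σ) = 2‖g‖/(√(K²+4σ‖g‖) + K)`; hence if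
`K² ≥ σ‖g‖` then `‖s^C‖ ≤ ‖g‖/K`, while if `K² ≤ σ‖g‖` then
`‖s^C‖ ≤ ‖g‖/√(σ‖g‖)`. -/
theorem cubic_cauchy_step_ub_of_K_pos
    {d : ℕ} (g : EuclideanSpace ℝ (Fin d)) (hg : g ≠ 0)
    (H : EuclideanSpace ℝ (Fin d) →L[ℝ] EuclideanSpace ℝ (Fin d))
    (hHsym : ∀ u v, ⟪H u, v⟫ = ⟪u, H v⟫)
    (σ : ℝ) (hσ : 0 < σ)
    (K : ℝ) (hK : K = ⟪H g, g⟫ / ‖g‖^2) (hKpos : 0 < K)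
    (sC : EuclideanSpace ℝ (Fin d))
    (hsC : ‖sC‖ = (Real.sqrt (K^2 + 4*σ*‖g‖) - K) / (2*σ)) :
    (Real.sqrt (K^2 + 4*σ*‖g‖) - K) / (2*σ)
      = 2*‖g‖ / (Real.sqrt (K^2 + 4*σ*‖g‖) + K)
    ∧ (K^2 ≥ σ*‖g‖ → ‖sC‖ ≤ ‖g‖ / K)
    ∧ (K^2 ≤ σ*‖g‖ → ‖sC‖ ≤ ‖g‖ / Real.sqrt (σ*‖g‖)) := by

  have hgpos : 0 < ‖g‖ := norm_pos_iff.mpr hg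
  set r := Real.sqrt (K^2 + 4*σ*‖g‖) with hr
  have hnn : (0:ℝ) ≤ K^2 + 4*σ*‖g‖ := by positivity
  have hr2 : r^2 = K^2 + 4*σ*‖g‖ := Real.sq_sqrt hnn
  have hrK : K ≤ r := by
    have : K = Real.sqrt (K^2) := by
      rw [Real.sqrt_sq hKpos.le]
    rw [this, hr]
    apply Real.sqrt_le_sqrt; nlinarith
  have hrpos : 0 < r + K := by linarith
  have heq : (r - K) / (2*σ) = 2*‖g‖ / (r + K) := by
    rw [div_eq_div_iff (by positivity) hrpos.ne']
    nlinarith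
  refine ⟨heq, ?_, ?_⟩
  · intro _
    rw [hsC, heq, div_le_div_iff₀ hrpos hKpos]
    nlinarith
  · intro _
    have hsg : 0 < Real.sqrt (σ*‖g‖) := Real.sqrt_pos.mpr (by positivity)
    have hsq : Real.sqrt (σ*‖g‖)^2 = σ*‖g‖ := Real.sq_sqrt (by positivity)
    have hrnn : 0 ≤ r := Real.sqrt_nonneg _
    have h2 : 2 * Real.sqrt (σ*‖g‖) ≤ r := by nlinarith
    rw [hsC, heq, div_le_div_iff₀ hrpos hsg]
    nlinarith
end

section
/- Let δ_g, δ_H, L > 0, σ ≥ 2L, K ≥ 0, ε > 0, and let s, s^C ∈ ℝ^d with ‖s^C‖ = (√(K² + 4σε') − K)/(2σ) for some ε' ≥ ε. If δ_H ≤ (√(K² + 8Lε) − K)/24 and δ_g ≤ (√(K² + 8Lε) − K)²/(192L), then δ_g‖s‖ + ½δ_H‖s‖² + (L/2 − σ/3)‖s‖³ ≤ δ_g‖s^C‖ + ½δ_H‖s^C‖². -/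
set_option maxHeartbeats 1000000 in
private lemma arc_aux (δg δH L σ a c : ℝ)
    (hδg : 0 < δg) (hδH : 0 < δH) (hL : 0 < L) (hσ : 2*L ≤ σ)
    (ha0 : 0 ≤ a) (hc0 : 0 ≤ c)
    (h1 : δg ≤ σ*c^2/24) (h2 : δH ≤ σ*c/12) :
    δg*a + (1/2)*δH*a^2 + (L/2 - σ/3)*a^3 ≤ δg*c + (1/2)*δH*c^2 := by
  rcases le_total a c with hac | hca
  · have hcube : (L/2 - σ/3)*a^3 ≤ 0 :=
      mul_nonpos_of_nonpos_of_nonneg (by linarith) (by positivity)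
    nlinarith [mul_nonneg (sub_nonneg.2 hac) (le_of_lt hδg),
      mul_nonneg (mul_nonneg (le_of_lt hδH) (sub_nonneg.2 hac)) (by linarith : (0:ℝ) ≤ a + c)]
  · have hh : δg + δH/2*a - σ/12*a^2 ≤ 0 := by
      have hσ0 : (0:ℝ) < σ := by linarith
      have s1 : σ/12*c*a ≤ σ/12*a^2 := by
        nlinarith [mul_nonneg (mul_nonneg hσ0.le (sub_nonneg.2 hca)) ha0]
      have s2 : (δH/2 - σ/12*c)*a ≤ (δH/2 - σ/12*c)*c :=
        mul_le_mul_of_nonpos_left hca (by linarith)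
      nlinarith
    have hla : δg*a + δH/2*a^2 - σ/12*a^3 ≤ 0 := by
      nlinarith [mul_nonpos_of_nonneg_of_nonpos ha0 hh]
    have hcube : (L/2 - σ/3)*a^3 ≤ -(σ/12)*a^3 :=
      mul_le_mul_of_nonneg_right (by linarith) (by positivity)
    have r1 : 0 ≤ δg*c := mul_nonneg (le_of_lt hδg) hc0
    have r2 : 0 ≤ δH*c^2 := mul_nonneg (le_of_lt hδH) (sq_nonneg c)
    linarith

set_option maxHeartbeats 1000000 in
/-- Key technical inequality for optimal ARC complexity: the model-error upper
bound at any step `s` is dominated by its value at the Cauchy step. -/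
theorem arc_error_dominated_by_cauchy
    {d : ℕ} (δg δH L σ K ε ε' : ℝ)
    (hδg : 0 < δg) (hδH : 0 < δH) (hL : 0 < L)
    (hσ : 2*L ≤ σ) (hK : 0 ≤ K) (hε : 0 < ε) (hε' : ε ≤ ε')
    (s sC : EuclideanSpace ℝ (Fin d))
    (hsC : ‖sC‖ = (Real.sqrt (K^2 + 4*σ*ε') - K) / (2*σ))
    (hδH' : δH ≤ (Real.sqrt (K^2 + 8*L*ε) - K) / 24)
    (hδg' : δg ≤ (Real.sqrt (K^2 + 8*L*ε) - K)^2 / (192*L)) :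
    δg*‖s‖ + (1/2)*δH*‖s‖^2 + (L/2 - σ/3)*‖s‖^3
      ≤ δg*‖sC‖ + (1/2)*δH*‖sC‖^2 := by
  have hσ0 : 0 < σ := by linarith
  set a := ‖s‖ with ha
  set c := ‖sC‖ with hc
  have ha0 : 0 ≤ a := norm_nonneg _
  set w1 := Real.sqrt (K^2 + 8*L*ε) with hw1
  set w2 := Real.sqrt (K^2 + 4*σ*ε') with hw2
  have hw1sq : w1^2 = K^2 + 8*L*ε := Real.sq_sqrt (by nlinarith [sq_nonneg K])
  have hw2sq : w2^2 = K^2 + 4*σ*ε' := Real.sq_sqrt (by nlinarith [sq_nonneg K])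
  have hw1nn : 0 ≤ w1 := Real.sqrt_nonneg _
  have hw2nn : 0 ≤ w2 := Real.sqrt_nonneg _
  have hw1K : K < w1 := by nlinarith
  have hw12 : w1 ≤ w2 := Real.sqrt_le_sqrt (by nlinarith)
  have hcval : c = (w2 - K) / (2*σ) := hsC
  have hc2 : 2*σ*c = w2 - K := by
    rw [hcval]; field_simp
  have hc0 : 0 ≤ c := by
    rw [hcval]
    apply div_nonneg _ (by linarith)
    linarith
  have hw1Kpos : 0 < w1 + K := by linarith
  have hw2Kpos : 0 < w2 + K := by linarith
  -- key: ε*(w1-K)*(w2+K) ≤ ε'*(w2-K)*(w1+K)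
  have key1 : ε*(w1-K)*(w2+K) ≤ ε'*(w2-K)*(w1+K) := by
    nlinarith [mul_nonneg (mul_nonneg (by linarith : (0:ℝ) ≤ ε' - ε)
        (by linarith : (0:ℝ) ≤ w2 - K)) (le_of_lt hw1Kpos),
      mul_nonneg (mul_nonneg (le_of_lt hε) hK) (sub_nonneg.2 hw12)]
  -- σ*(w1-K)^2 ≤ 2*L*(w2-K)^2
  have key2 : σ*(w1-K)^2 ≤ 2*L*(w2-K)^2 := by
    have hpos : 0 < (w1+K)*(w2+K) := mul_pos hw1Kpos hw2Kpos
    have t1 : σ*(w1-K)^2*((w1+K)*(w2+K)) = 8*L*σ*(ε*(w1-K)*(w2+K)) := by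
      linear_combination σ*(w2+K)*(w1-K)*hw1sq
    have t2 : 8*L*σ*(ε'*(w2-K)*(w1+K)) = 2*L*(w2-K)^2*((w1+K)*(w2+K)) := by
      linear_combination -(2*L*(w1+K)*(w2-K)*hw2sq)
    have t3 : 8*L*σ*(ε*(w1-K)*(w2+K)) ≤ 8*L*σ*(ε'*(w2-K)*(w1+K)) :=
      mul_le_mul_of_nonneg_left key1 (by positivity)
    have hmain : σ*(w1-K)^2*((w1+K)*(w2+K)) ≤ 2*L*(w2-K)^2*((w1+K)*(w2+K)) := by linarith
    exact le_of_mul_le_mul_right (by linarith [hmain]) hpos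
  -- δg ≤ σ c^2 / 24
  have hδg2 : δg ≤ σ*c^2/24 := by
    have h1 : (w1-K)^2/(192*L) ≤ (w2-K)^2/(96*σ) := by
      rw [div_le_div_iff₀ (by positivity) (by positivity)]
      nlinarith
    have h2 : (w2-K)^2/(96*σ) = σ*c^2/24 := by
      rw [← hc2]; field_simp; ring
    calc δg ≤ (w1-K)^2/(192*L) := hδg'
      _ ≤ (w2-K)^2/(96*σ) := h1
      _ = σ*c^2/24 := h2
  -- δH ≤ σ c / 12
  have hδH2 : δH ≤ σ*c/12 := by
    have : w1 - K ≤ 2*σ*c := by rw [hc2]; linarith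
    linarith [hδH']
  exact arc_aux δg δH L σ a c hδg hδH hL hσ ha0 hc0 hδg2 hδH2
end

section
/- Under the same setup (s* global minimizer of the cubic model with H + σ‖s*‖I ⪰ 0, ‖H − ∇²F(x)‖ ≤ δ_H, ∇²F L-Lipschitz), we have λ_min(∇²F(x + s*)) ≥ −δ_H − (σ + L)‖s*‖, hence ‖s*‖ ≥ −(δ_H + λ_min(∇²F(x+s*)))/(σ + L). -/
open scoped RealInnerProductSpace

/-- Second-order guarantee at the cubic-model minimizer:
`λ_min(∇²F(x+s*)) ≥ −δ_H − (σ+L)‖s*‖`, hence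
`‖s*‖ ≥ −(δ_H + λ_min(∇²F(x+s*)))/(σ+L)`. -/
theorem cubic_minimizer_second_order_bound
    {d : ℕ} (F : EuclideanSpace ℝ (Fin d) → ℝ)
    (x g sStar : EuclideanSpace ℝ (Fin d))
    (H : EuclideanSpace ℝ (Fin d) →L[ℝ] EuclideanSpace ℝ (Fin d))
    (L σ δg δH lamMin : ℝ)
    (hL : 0 < L) (hσ : 0 < σ) (hδg : 0 ≤ δg) (hδH : 0 ≤ δH)
    (hF : ContDiff ℝ 2 F)
    (hHsym : ∀ u v, ⟪H u, v⟫ = ⟪u, H v⟫)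
    (hLip : ∀ y z : EuclideanSpace ℝ (Fin d),
      ‖fderiv ℝ (gradient F) y - fderiv ℝ (gradient F) z‖ ≤ L * ‖y - z‖)
    (hg : ‖g - gradient F x‖ ≤ δg)
    (hH : ‖H - fderiv ℝ (gradient F) x‖ ≤ δH)
    (hfoc : g + H sStar + (σ * ‖sStar‖) • sStar = 0)
    (hsoc : ∀ v : EuclideanSpace ℝ (Fin d),
      0 ≤ ⟪v, H v⟫ + σ * ‖sStar‖ * ‖v‖^2)
    (hlam_attained : ∃ v : EuclideanSpace ℝ (Fin d), ‖v‖ = 1 ∧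
      ⟪v, fderiv ℝ (gradient F) (x + sStar) v⟫ = lamMin)
    (hlam_lb : ∀ v : EuclideanSpace ℝ (Fin d), ‖v‖ = 1 →
      lamMin ≤ ⟪v, fderiv ℝ (gradient F) (x + sStar) v⟫) :
    lamMin ≥ -δH - (σ + L) * ‖sStar‖
    ∧ ‖sStar‖ ≥ -(δH + lamMin) / (σ + L) := by
  obtain ⟨v, hv, hveq⟩ := hlam_attained
  set A := fderiv ℝ (gradient F) (x + sStar) with hA
  set B := fderiv ℝ (gradient F) x with hB
  have key : ∀ (T : EuclideanSpace ℝ (Fin d) →L[ℝ] EuclideanSpace ℝ (Fin d)) (c : ℝ),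
      ‖T‖ ≤ c → -c ≤ ⟪v, T v⟫ := by
    intro T c hc
    have h1 : |⟪v, T v⟫| ≤ ‖v‖ * ‖T v‖ := abs_real_inner_le_norm v (T v)
    have h2 : ‖T v‖ ≤ ‖T‖ * ‖v‖ := T.le_opNorm v
    rw [hv, mul_one] at h2
    rw [hv, one_mul] at h1
    have := (abs_le.mp (h1.trans (h2.trans hc))).1
    linarith
  have hAB : ‖A - B‖ ≤ L * ‖sStar‖ := by
    have h := hLip (x + sStar) x
    have he : x + sStar - x = sStar := by abel
    rw [he] at h
    exact h
  have h1 : -(L * ‖sStar‖) ≤ ⟪v, (A - B) v⟫ := key (A - B) (L * ‖sStar‖) hAB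
  have h2 : -δH ≤ ⟪v, (B - H) v⟫ := by
    refine key (B - H) δH ?_
    rw [norm_sub_rev]
    exact hH
  have h3 : -(σ * ‖sStar‖) ≤ ⟪v, H v⟫ := by
    have := hsoc v
    rw [hv] at this
    nlinarith
  have hsplit : ⟪v, A v⟫ = ⟪v, H v⟫ + ⟪v, (B - H) v⟫ + ⟪v, (A - B) v⟫ := by
    simp only [ContinuousLinearMap.sub_apply, inner_sub_right]
    ring
  have hfirst : lamMin ≥ -δH - (σ + L) * ‖sStar‖ := by
    rw [← hveq, hsplit]; nlinarith
  refine ⟨hfirst, ?_⟩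
  rw [ge_iff_le, div_le_iff₀ (by linarith)]
  linarith
end
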